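/- Fix constants ρ̄ > 0, p̄_ρ > 0, k̄ > 0, ν̄ > 0, λ̄ ∈ ℝ with 2ν̄ + λ̄ > 0, and ū₁, ū₂ ∈ ℝ. For ξ ∈ ℝ² with ξ ≠ 0, set ω = ξ/|ξ|, β(ξ) = p̄_ρ + k̄ρ̄|ξ|², and define the real 3×3 matrices A_S(ξ) = [[ω₁ū₁+ω₂ū₂, ω₁√β(ξ), ω₂√β(ξ)], [ω₁√β(ξ), ω₁ū₁+ω₂ū₂, 0], [ω₂√β(ξ), 0, ω₁ū₁+ω₂ū₂]] and B̄_S(ξ) = (1/ρ̄)[[0,0,0], [0, (2ν̄+λ̄)ω₁²+ν̄ω₂², (λ̄+ν̄)ω₁ω₂], [0, (λ̄+ν̄)ω₁ω₂, ν̄ω₁²+(2ν̄+λ̄)ω₂²]]. Then for every ξ ≠ 0: B̄_S(ξ) is positive semidefinite, its kernel equals span{(1,0,0)}, and the pair (A_S(ξ), B̄_S(ξ)) is genuinely coupled, i.e., for every μ ∈ ℝ and every ψ ∈ ℝ³ with ψ ≠ 0 and B̄_S(ξ)ψ = 0, one has (μI + A_S(ξ))ψ ≠ 0. -/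

import Mathlib

open Matrix

/-- Genuine coupling of a pair of real matrices `(A, B)`: no eigenvector of `A`
lies in the kernel of `B`. -/
def GenuinelyCoupled {n : ℕ} (A B : Matrix (Fin n) (Fin n) ℝ) : Prop :=
  ∀ (μ : ℝ) (ψ : Fin n → ℝ), ψ ≠ 0 → B *ᵥ ψ = 0 →
    (μ • (1 : Matrix (Fin n) (Fin n) ℝ) + A) *ᵥ ψ ≠ 0

set_option maxHeartbeats 1600000 in
/-- For the symmetrized symbols of the linearized two-dimensional
Navier–Stokes–Korteweg system, the generalized viscosity symbol `B̄_S(ξ)` is positive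
semidefinite with kernel `span{(1,0,0)}`, and the pair `(A_S(ξ), B̄_S(ξ))` is genuinely
coupled, for every `ξ ≠ 0`. -/
theorem NSK_genuinely_coupled (ρ pρ k ν lam u₁ u₂ : ℝ)
    (hρ : 0 < ρ) (hp : 0 < pρ) (hk : 0 < k) (hν : 0 < ν) (hlam : 0 < 2 * ν + lam)
    (ξ : Fin 2 → ℝ) (hξ : ξ ≠ 0) :
    let nξ := Real.sqrt (ξ 0 ^ 2 + ξ 1 ^ 2)
    let ω₁ := ξ 0 / nξ
    let ω₂ := ξ 1 / nξ
    let β := pρ + k * ρ * (ξ 0 ^ 2 + ξ 1 ^ 2)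
    let AS : Matrix (Fin 3) (Fin 3) ℝ :=
      !![ω₁ * u₁ + ω₂ * u₂, ω₁ * Real.sqrt β, ω₂ * Real.sqrt β;
         ω₁ * Real.sqrt β, ω₁ * u₁ + ω₂ * u₂, 0;
         ω₂ * Real.sqrt β, 0, ω₁ * u₁ + ω₂ * u₂]
    let BS : Matrix (Fin 3) (Fin 3) ℝ :=
      (1 / ρ) • !![0, 0, 0;
         0, (2 * ν + lam) * ω₁ ^ 2 + ν * ω₂ ^ 2, (lam + ν) * ω₁ * ω₂;
         0, (lam + ν) * ω₁ * ω₂, ν * ω₁ ^ 2 + (2 * ν + lam) * ω₂ ^ 2]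
    BS.PosSemidef ∧
    (∀ ψ : Fin 3 → ℝ, BS *ᵥ ψ = 0 ↔ ∃ t : ℝ, ψ = t • ![1, 0, 0]) ∧
    GenuinelyCoupled AS BS := by
  intro nξ ω₁ ω₂ β AS BS
  -- basic facts
  have hs : 0 < ξ 0 ^ 2 + ξ 1 ^ 2 := by
    have hi0 : ξ 0 ≠ 0 ∨ ξ 1 ≠ 0 := by
      by_contra h
      push_neg at h
      exact hξ (funext fun i => by fin_cases i <;> simp [h.1, h.2])
    rcases hi0 with h | h
    · nlinarith [sq_nonneg (ξ 1), pow_two_pos_of_ne_zero h]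
    · nlinarith [sq_nonneg (ξ 0), pow_two_pos_of_ne_zero h]
  have hn : 0 < nξ := Real.sqrt_pos.mpr hs
  have hn2 : nξ ^ 2 = ξ 0 ^ 2 + ξ 1 ^ 2 := Real.sq_sqrt hs.le
  have hω : ω₁ ^ 2 + ω₂ ^ 2 = 1 := by
    show (ξ 0 / nξ) ^ 2 + (ξ 1 / nξ) ^ 2 = 1
    field_simp
    linarith [hn2]
  have hβ : 0 < β := by
    have : 0 < k * ρ * (ξ 0 ^ 2 + ξ 1 ^ 2) := by positivity
    show 0 < pρ + k * ρ * (ξ 0 ^ 2 + ξ 1 ^ 2); linarith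
  have hsβ : 0 < Real.sqrt β := Real.sqrt_pos.mpr hβ
  -- the kernel characterization
  have hker : ∀ ψ : Fin 3 → ℝ, BS *ᵥ ψ = 0 ↔ ∃ t : ℝ, ψ = t • ![1, 0, 0] := by
    intro ψ
    constructor
    · intro h
      have h1 := congrFun h 1
      have h2 := congrFun h 2
      simp [BS, Matrix.mulVec, dotProduct, Fin.sum_univ_three, Matrix.vecHead, Matrix.vecTail] at h1 h2
      have e1 : ((2 * ν + lam) * ω₁ ^ 2 + ν * ω₂ ^ 2) * ψ 1 + (lam + ν) * ω₁ * ω₂ * ψ 2 = 0 := by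
        have hρ' : (1:ℝ)/ρ ≠ 0 := by positivity
        field_simp at h1
        linarith [h1]
      have e2 : (lam + ν) * ω₁ * ω₂ * ψ 1 + (ν * ω₁ ^ 2 + (2 * ν + lam) * ω₂ ^ 2) * ψ 2 = 0 := by
        field_simp at h2
        linarith [h2]
      have hq : (2 * ν + lam) * (ω₁ * ψ 1 + ω₂ * ψ 2) ^ 2
          + ν * (ω₂ * ψ 1 - ω₁ * ψ 2) ^ 2 = 0 := by
        linear_combination ψ 1 * e1 + ψ 2 * e2
      have ha : ω₁ * ψ 1 + ω₂ * ψ 2 = 0 := by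
        have h1 : (ω₁ * ψ 1 + ω₂ * ψ 2) ^ 2 = 0 := by
          nlinarith [sq_nonneg (ω₁ * ψ 1 + ω₂ * ψ 2), sq_nonneg (ω₂ * ψ 1 - ω₁ * ψ 2)]
        exact pow_eq_zero_iff (two_ne_zero) |>.mp h1
      have hb : ω₂ * ψ 1 - ω₁ * ψ 2 = 0 := by
        have h1 : (ω₂ * ψ 1 - ω₁ * ψ 2) ^ 2 = 0 := by
          nlinarith [sq_nonneg (ω₁ * ψ 1 + ω₂ * ψ 2), sq_nonneg (ω₂ * ψ 1 - ω₁ * ψ 2)]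
        exact pow_eq_zero_iff (two_ne_zero) |>.mp h1
      have hψ1 : ψ 1 = 0 := by linear_combination ω₁ * ha + ω₂ * hb - ψ 1 * hω
      have hψ2 : ψ 2 = 0 := by linear_combination ω₂ * ha - ω₁ * hb - ψ 2 * hω
      refine ⟨ψ 0, ?_⟩
      funext i
      fin_cases i <;> simp [hψ1, hψ2]
    · rintro ⟨t, rfl⟩
      funext i
      fin_cases i <;> simp [BS, Matrix.mulVec, dotProduct, Fin.sum_univ_three]
  refine ⟨?_, hker, ?_⟩
  · refine Matrix.posSemidef_iff_dotProduct_mulVec.mpr ⟨?_, ?_⟩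
    · ext i j
      fin_cases i <;> fin_cases j <;>
        simp [BS, Matrix.conjTranspose_apply, Matrix.vecHead, Matrix.vecTail] <;> ring
    · intro x
      have key : (star x) ⬝ᵥ (BS *ᵥ x) =
          (1/ρ) * ((2*ν+lam) * (ω₁ * x 1 + ω₂ * x 2)^2 + ν * (ω₂ * x 1 - ω₁ * x 2)^2) := by
        simp [BS, dotProduct, Matrix.mulVec, Fin.sum_univ_three, Matrix.vecHead, Matrix.vecTail]
        ring
      rw [key]
      positivity
  · intro μ ψ hψ hB h
    rcases (hker ψ).mp hB with ⟨t, rfl⟩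
    have ht : t ≠ 0 := by
      intro h0; apply hψ; subst h0; simp
    have h1 := congrFun h 1
    have h2 := congrFun h 2
    simp [AS, Matrix.mulVec, dotProduct, Fin.sum_univ_three, Matrix.one_apply] at h1 h2
    have hω1 : ω₁ = 0 := by
      rcases h1 with (h' | h') | h'
      · exact h'
      · exact absurd h' hsβ.ne'
      · exact absurd h' ht
    have hω2 : ω₂ = 0 := by
      rcases h2 with (h' | h') | h'
      · exact h'
      · exact absurd h' hsβ.ne'
      · exact absurd h' ht
    rw [hω1, hω2] at hω; norm_num at hω
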